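/- Let p be a prime and D_k a set of k distinct positive integers whose gcd d is not divisible by p, with D_k' = (1/d)·D_k, and suppose ν_{{0}∪D_k'}(p) < p and S({0}∪D_k) ≠ 0. Then S({0} ∪ p·D_k) = S({0} ∪ D_k) · (1 + (ν_p - 1)/(p - ν_p)), where ν_p = ν_{{0}∪D_k'}(p) and p·D_k = {p d_1, ..., p d_k}. -/

import Mathlib

open Finset

/-- Number of residue classes mod `p` occupied by the elements of `D`. -/
def nu (D : Finset ℕ) (p : ℕ) : ℕ := (D.image (· % p)).card

/-- The Hardy–Littlewood singular series of a finite set `D`. -/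
noncomputable def singSeries (D : Finset ℕ) : ℝ :=
  ∏' p : Nat.Primes, ((1 - 1 / ((p : ℕ) : ℝ)) ^ D.card)⁻¹ * (1 - (nu D (p : ℕ) : ℝ) / ((p : ℕ) : ℝ))

/-- `primePi x D` counts positive integers `m ≤ x` with `m + d` prime for all `d ∈ D`. -/
noncomputable def primePi (x : ℝ) (D : Finset ℕ) : ℕ :=
  {m : ℕ | 0 < m ∧ (m : ℝ) ≤ x ∧ ∀ d ∈ D, Nat.Prime (m + d)}.ncard

/-- `Ncham x D` counts `n` such that `p_{n+k} ≤ x` and the gaps `p_{n+i} - p_n` for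
`i = 1, …, k` are exactly the elements of `D` (with `k = D.card`). -/
noncomputable def Ncham (x : ℝ) (D : Finset ℕ) : ℕ :=
  {n : ℕ | ((Nat.nth Nat.Prime (n + D.card) : ℝ) ≤ x) ∧
    (Finset.range D.card).image
      (fun i => Nat.nth Nat.Prime (n + i + 1) - Nat.nth Nat.Prime n) = D}.ncard

/-- `D` is a `k`-tuple jumping champion for `x`. -/
def IsChampion (k : ℕ) (x : ℝ) (D : Finset ℕ) : Prop :=
  D.card = k ∧ (∀ d ∈ D, 0 < d) ∧
    ∀ D' : Finset ℕ, D'.card = k → (∀ d ∈ D', 0 < d) → Ncham x D' ≤ Ncham x D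

/-- Number of prime factors counted with multiplicity. -/
def bigOmega (n : ℕ) : ℕ := n.primeFactorsList.length

/-- The `n`-th primorial `2·3·5⋯p_n`. -/
noncomputable def primorial' (n : ℕ) : ℕ := ∏ i ∈ Finset.range n, Nat.nth Nat.Prime i

/-- The largest primorial not exceeding `y` (equal to `1` if `y < 1`). -/
noncomputable def largestPrimorial (y : ℝ) : ℕ :=
  primorial' (sSup {n : ℕ | (primorial' n : ℝ) ≤ y})

-- ===== auxiliary lemmas =====

private lemma aux_hasProd_zero {ι : Type*} {f : ι → ℝ} (i : ι) (h : f i = 0) :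
    HasProd f 0 := by
  have hev : ∀ᶠ s : Finset ι in Filter.atTop, (0 : ℝ) = ∏ j ∈ s, f j := by
    filter_upwards [Filter.eventually_ge_atTop ({i} : Finset ι)] with s hs
    exact (Finset.prod_eq_zero (hs (Finset.mem_singleton_self i)) h).symm
  exact tendsto_const_nhds.congr' hev

private lemma nu_le (E : Finset ℕ) {q : ℕ} (hq : 0 < q) : nu E q ≤ q := by
  have h : E.image (· % q) ⊆ Finset.range q := by
    intro x hx
    obtain ⟨d, -, rfl⟩ := Finset.mem_image.1 hx
    exact Finset.mem_range.2 (Nat.mod_lt d hq)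
  simpa [nu] using (Finset.card_le_card h).trans_eq (Finset.card_range q)

private lemma nu_mul_left (S : Finset ℕ) {q a : ℕ} (hq : 0 < q) (ha : Nat.gcd q a = 1) :
    nu (S.image (fun x => a * x)) q = nu S q := by
  unfold nu
  rw [Finset.image_image]
  have h1 : S.image ((· % q) ∘ fun x => a * x) =
      (S.image (· % q)).image (fun x => a * x % q) := by
    rw [Finset.image_image]
    refine Finset.image_congr fun x _ => ?_
    simp [Function.comp, Nat.mul_mod]
  rw [h1, Finset.card_image_of_injOn]
  intro x hx y hy hxy
  have hx' : x < q := by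
    obtain ⟨d, -, rfl⟩ := Finset.mem_image.1 (Finset.mem_coe.1 hx)
    exact Nat.mod_lt d hq
  have hy' : y < q := by
    obtain ⟨d, -, rfl⟩ := Finset.mem_image.1 (Finset.mem_coe.1 hy)
    exact Nat.mod_lt d hq
  have key : x ≡ y [MOD q] := Nat.ModEq.cancel_left_of_coprime ha hxy
  rwa [Nat.ModEq, Nat.mod_eq_of_lt hx', Nat.mod_eq_of_lt hy'] at key

private lemma aux_pow_bound (n : ℕ) {t : ℝ} (h0 : 0 ≤ t) (h1 : t ≤ 1) :
    |(1 - t) ^ n - (1 - (n : ℝ) * t)| ≤ (n : ℝ) ^ 2 * t ^ 2 := by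
  induction n with
  | zero => simp
  | succ n ih =>
    have e : (1 - t) ^ (n + 1) - (1 - ((n + 1 : ℕ) : ℝ) * t)
        = (1 - t) * ((1 - t) ^ n - (1 - (n : ℝ) * t)) + (n : ℝ) * t ^ 2 := by
      push_cast; ring
    rw [e]
    have hA : |1 - t| ≤ 1 := abs_le.2 ⟨by linarith, by linarith⟩
    have h2 : |(1 - t) * ((1 - t) ^ n - (1 - (n : ℝ) * t))| ≤ (n : ℝ) ^ 2 * t ^ 2 := by
      rw [abs_mul]
      calc |1 - t| * |(1 - t) ^ n - (1 - (n : ℝ) * t)| ≤ 1 * ((n : ℝ) ^ 2 * t ^ 2) :=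
        mul_le_mul hA ih (abs_nonneg _) zero_le_one
      _ = (n : ℝ) ^ 2 * t ^ 2 := one_mul _
    have h3 : |(n : ℝ) * t ^ 2| = (n : ℝ) * t ^ 2 := abs_of_nonneg (by positivity)
    calc |(1 - t) * ((1 - t) ^ n - (1 - (n : ℝ) * t)) + (n : ℝ) * t ^ 2|
        ≤ |(1 - t) * ((1 - t) ^ n - (1 - (n : ℝ) * t))| + |(n : ℝ) * t ^ 2| := abs_add_le _ _
      _ ≤ (n : ℝ) ^ 2 * t ^ 2 + (n : ℝ) * t ^ 2 := by rw [h3]; linarith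
      _ ≤ ((n + 1 : ℕ) : ℝ) ^ 2 * t ^ 2 := by
          push_cast
          nlinarith [sq_nonneg t, Nat.cast_nonneg (α := ℝ) n]

private lemma aux_abs_log_le {x : ℝ} (hx : 1 / 2 ≤ x) : |Real.log x| ≤ 2 * |x - 1| := by
  have hx0 : 0 < x := by linarith
  rcases le_or_gt 1 x with h | h
  · rw [abs_of_nonneg (Real.log_nonneg h), abs_of_nonneg (by linarith)]
    have := Real.log_le_sub_one_of_pos hx0
    linarith
  · rw [abs_of_nonpos (Real.log_nonpos hx0.le h.le), abs_of_neg (by linarith)]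
    have h2 : Real.log x⁻¹ ≤ x⁻¹ - 1 := Real.log_le_sub_one_of_pos (by positivity)
    rw [Real.log_inv] at h2
    have hinv : x⁻¹ ≤ 2 := by
      rw [inv_le_comm₀ hx0 (by norm_num)]
      linarith
    have e : x⁻¹ - 1 = (1 - x) * x⁻¹ := by field_simp
    have h3 : (1 - x) * x⁻¹ ≤ (1 - x) * 2 := by
      apply mul_le_mul_of_nonneg_left hinv (by linarith)
    rw [e] at h2
    linarith

private lemma aux_summable_primes (A : ℝ) :
    Summable (fun q : Nat.Primes => A / ((q : ℕ) : ℝ) ^ 2) := by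
  have h : Summable (fun n : ℕ => A / (n : ℝ) ^ 2) := by
    have h2 := Real.summable_one_div_nat_pow.mpr (by norm_num : 1 < 2)
    simpa [div_eq_mul_inv] using h2.mul_left A
  exact h.comp_injective Subtype.coe_injective

private lemma aux_multipliable (E : Finset ℕ)
    (hpos : ∀ q : Nat.Primes, 0 < ((1 - 1 / ((q : ℕ) : ℝ)) ^ E.card)⁻¹ *
      (1 - (nu E (q : ℕ) : ℝ) / ((q : ℕ) : ℝ))) :
    Multipliable (fun q : Nat.Primes =>
      ((1 - 1 / ((q : ℕ) : ℝ)) ^ E.card)⁻¹ * (1 - (nu E (q : ℕ) : ℝ) / ((q : ℕ) : ℝ))) := by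
  set n := E.card with hn
  set f : Nat.Primes → ℝ := fun q =>
    ((1 - 1 / ((q : ℕ) : ℝ)) ^ n)⁻¹ * (1 - (nu E (q : ℕ) : ℝ) / ((q : ℕ) : ℝ)) with hf
  have hsum : Summable (fun q : Nat.Primes => Real.log (f q)) := by
    set A : ℝ := (n : ℝ) ^ 2 * 2 ^ n with hA
    have hA0 : 0 ≤ A := by positivity
    set B : ℝ := max (((E.sup id : ℕ) : ℝ) + 1) (2 * A + 2) with hB
    refine Summable.of_norm_bounded_eventually (g := fun q : Nat.Primes => 2 * A / ((q : ℕ) : ℝ) ^ 2)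
      (aux_summable_primes (2 * A)) ?_
    have hev : ∀ᶠ q : Nat.Primes in Filter.cofinite, B ≤ ((q : ℕ) : ℝ) := by
      rw [Filter.eventually_cofinite]
      have hfin : {m : ℕ | ¬ B ≤ (m : ℝ)}.Finite := by
        apply Set.Finite.subset (Set.finite_Iio ⌈B⌉₊)
        intro m hm
        simp only [Set.mem_setOf_eq, not_le] at hm
        exact Set.mem_Iio.2 (Nat.lt_ceil.2 hm)
      exact Set.Finite.preimage (Set.injOn_of_injective Subtype.coe_injective)
        hfin
    filter_upwards [hev] with q hq
    have hq2 : (2 : ℕ) ≤ (q : ℕ) := q.2.two_le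
    set Q : ℝ := ((q : ℕ) : ℝ) with hQdef
    have hQ2 : (2 : ℝ) ≤ Q := by rw [hQdef]; exact_mod_cast hq2
    have hQ0 : (0 : ℝ) < Q := by linarith
    set t : ℝ := 1 / Q with ht
    have ht0 : 0 < t := by positivity
    have ht12 : t ≤ 1 / 2 := by
      rw [ht, div_le_div_iff₀ hQ0 (by norm_num)]
      linarith
    have ht1 : t ≤ 1 := by linarith
    -- nu E q = n
    have hνn : nu E (q : ℕ) = n := by
      have himg : E.image (· % (q : ℕ)) = E := by
        have : ∀ x ∈ E, x % (q : ℕ) = x := by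
          intro x hx
          apply Nat.mod_eq_of_lt
          have hxle : x ≤ E.sup id := Finset.le_sup (f := id) hx
          have hsup : (((E.sup id : ℕ) : ℝ)) + 1 ≤ Q := le_trans (le_max_left _ _) hq
          have hlt : ((x : ℝ)) < Q := by
            have : ((x : ℝ)) ≤ ((E.sup id : ℕ) : ℝ) := by exact_mod_cast hxle
            linarith
          rw [hQdef] at hlt
          exact_mod_cast hlt
        exact (Finset.image_congr this).trans Finset.image_id
      rw [nu, himg, hn]
    have hBQ : 2 * A + 2 ≤ Q := le_trans (le_max_right _ _) hq
    -- key estimates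
    have h1t : (1 : ℝ) / 2 ≤ 1 - t := by linarith
    have hpow : ((1 : ℝ) / 2) ^ n ≤ (1 - t) ^ n := pow_le_pow_left₀ (by norm_num) h1t n
    have hpow0 : (0 : ℝ) < (1 - t) ^ n := lt_of_lt_of_le (by positivity) hpow
    have hfq : f q = ((1 - t) ^ n)⁻¹ * (1 - (n : ℝ) * t) := by
      rw [hf]
      simp only [hνn]
      rw [← hQdef, ← ht]
      ring_nf
      rw [ht]; ring
    have hnum : |(1 - (n : ℝ) * t) - (1 - t) ^ n| ≤ (n : ℝ) ^ 2 * t ^ 2 := by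
      rw [abs_sub_comm]
      exact aux_pow_bound n ht0.le ht1
    have hdiff : f q - 1 = ((1 - (n : ℝ) * t) - (1 - t) ^ n) / (1 - t) ^ n := by
      rw [hfq]
      field_simp
    have hest : |f q - 1| ≤ A * t ^ 2 := by
      rw [hdiff, abs_div, abs_of_pos hpow0]
      calc |(1 - (n : ℝ) * t) - (1 - t) ^ n| / (1 - t) ^ n
          ≤ ((n : ℝ) ^ 2 * t ^ 2) / ((1 / 2) ^ n) := by
            exact div_le_div₀ (by positivity) hnum (by positivity) hpow
        _ = A * t ^ 2 := by
            rw [hA, one_div, inv_pow, div_eq_mul_inv, inv_inv]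
            ring
    have hAt : A * t ^ 2 ≤ 1 / 2 := by
      have h1 : A * t ≤ 1 / 2 := by
        rw [ht, mul_one_div, div_le_div_iff₀ hQ0 (by norm_num)]
        linarith
      calc A * t ^ 2 = (A * t) * t := by ring
        _ ≤ (1 / 2) * t := mul_le_mul_of_nonneg_right h1 ht0.le
        _ ≤ 1 / 2 := by linarith
    have hfq12 : 1 / 2 ≤ f q := by
      have := abs_le.1 (hest.trans hAt)
      linarith [this.1]
    have hlog : |Real.log (f q)| ≤ 2 * |f q - 1| := aux_abs_log_le hfq12
    have : ‖Real.log (f q)‖ ≤ 2 * (A * t ^ 2) := by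
      rw [Real.norm_eq_abs]
      calc |Real.log (f q)| ≤ 2 * |f q - 1| := hlog
        _ ≤ 2 * (A * t ^ 2) := by linarith
    calc ‖Real.log (f q)‖ ≤ 2 * (A * t ^ 2) := this
      _ = 2 * A / Q ^ 2 := by rw [ht]; field_simp
  exact Real.multipliable_of_summable_log hpos hsum

/-- effect on the singular series of multiplying a tuple by a prime `p`
not dividing its gcd. -/
theorem stmt19 (k : ℕ) (hk : 1 ≤ k) (p : ℕ) (hp : p.Prime) (D : Finset ℕ)
    (hcard : D.card = k) (hpos : ∀ d ∈ D, 0 < d)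
    (hgcd : ¬ p ∣ D.gcd id)
    (hν : nu (insert 0 (D.image (· / D.gcd id))) p < p)
    (hS : singSeries (insert 0 D) ≠ 0) :
    singSeries (insert 0 (D.image (fun d => p * d))) =
      singSeries (insert 0 D) *
        (1 + ((nu (insert 0 (D.image (· / D.gcd id))) p : ℝ) - 1) /
            ((p : ℝ) - (nu (insert 0 (D.image (· / D.gcd id))) p : ℝ))) := by
  classical
  set ν : ℕ := nu (insert 0 (D.image (· / D.gcd id))) p with hνdef
  have hppos : 0 < p := hp.pos
  have h0D : 0 ∉ D := fun h => lt_irrefl 0 (hpos 0 h)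
  have h0pD : 0 ∉ D.image (fun d => p * d) := by
    intro hmem
    obtain ⟨d, hd, heq⟩ := Finset.mem_image.1 hmem
    have : 0 < p * d := Nat.mul_pos hppos (hpos d hd)
    omega
  have hcardE : (insert 0 D).card = k + 1 := by
    rw [Finset.card_insert_of_notMem h0D, hcard]
  have hcardP : (insert 0 (D.image (fun d => p * d))).card = k + 1 := by
    rw [Finset.card_insert_of_notMem h0pD,
      Finset.card_image_of_injective _ (mul_right_injective₀ hppos.ne'), hcard]
  -- nu facts
  have hgdvd : ∀ d ∈ D, D.gcd id ∣ d := fun d hd => Finset.gcd_dvd hd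
  have hco : Nat.gcd p (D.gcd id) = 1 := (Nat.Prime.coprime_iff_not_dvd hp).mpr hgcd
  have hEeq : insert 0 D = (insert 0 (D.image (· / D.gcd id))).image (fun x => D.gcd id * x) := by
    rw [Finset.image_insert, mul_zero, Finset.image_image]
    congr 1
    exact ((Finset.image_congr fun d hd => (Nat.mul_div_cancel' (hgdvd d hd))).trans
      Finset.image_id).symm
  have hνE : nu (insert 0 D) p = ν := by
    rw [hEeq, nu_mul_left _ hppos hco]
  have hνP1 : nu (insert 0 (D.image (fun d => p * d))) p = 1 := by
    have hall : ∀ x ∈ insert 0 (D.image (fun d => p * d)), x % p = (fun _ : ℕ => 0) x := by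
      intro x hx
      rcases Finset.mem_insert.1 hx with rfl | hx
      · simp
      · obtain ⟨d, -, rfl⟩ := Finset.mem_image.1 hx
        simp [Nat.mul_mod_right]
    rw [nu, Finset.image_congr hall, Finset.image_const (Finset.insert_nonempty _ _)]
    simp
  have hνPq : ∀ q : Nat.Primes, (q : ℕ) ≠ p →
      nu (insert 0 (D.image (fun d => p * d))) (q : ℕ) = nu (insert 0 D) (q : ℕ) := by
    intro q hqp
    have heq : insert 0 (D.image (fun d => p * d)) = (insert 0 D).image (fun x => p * x) := by
      rw [Finset.image_insert, mul_zero]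
    rw [heq, nu_mul_left _ q.2.pos ((Nat.coprime_primes q.2 hp).mpr hqp)]
  -- the factor functions
  set f : Nat.Primes → ℝ := fun q =>
    ((1 - 1 / ((q : ℕ) : ℝ)) ^ (insert 0 D).card)⁻¹ *
      (1 - (nu (insert 0 D) (q : ℕ) : ℝ) / ((q : ℕ) : ℝ)) with hfdef
  have hSE : singSeries (insert 0 D) = ∏' q, f q := rfl
  have hfne : ∀ q : Nat.Primes, f q ≠ 0 := by
    intro q hq0
    exact hS (by rw [hSE]; exact (aux_hasProd_zero q hq0).tprod_eq)
  have hfpos : ∀ q : Nat.Primes, 0 < f q := by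
    intro q
    have hq2 : (2 : ℕ) ≤ (q : ℕ) := q.2.two_le
    have hQ1 : (1 : ℝ) < ((q : ℕ) : ℝ) := by exact_mod_cast lt_of_lt_of_le one_lt_two hq2
    have h1 : (0 : ℝ) < ((1 - 1 / ((q : ℕ) : ℝ)) ^ (insert 0 D).card)⁻¹ := by
      have : (0 : ℝ) < 1 - 1 / ((q : ℕ) : ℝ) := by
        have : 1 / ((q : ℕ) : ℝ) < 1 := by
          rw [div_lt_one (by linarith)]; exact hQ1
        linarith
      positivity
    have h2 : (0 : ℝ) ≤ 1 - (nu (insert 0 D) (q : ℕ) : ℝ) / ((q : ℕ) : ℝ) := by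
      have hle : nu (insert 0 D) (q : ℕ) ≤ (q : ℕ) := nu_le _ q.2.pos
      have : (nu (insert 0 D) (q : ℕ) : ℝ) / ((q : ℕ) : ℝ) ≤ 1 := by
        rw [div_le_one (by linarith)]
        exact_mod_cast hle
      linarith
    have hge : 0 ≤ f q := mul_nonneg h1.le h2
    exact hge.lt_of_ne (Ne.symm (hfne q))
  have hmul : Multipliable f := aux_multipliable (insert 0 D) hfpos
  -- single-factor correction
  set P : Nat.Primes := ⟨p, hp⟩ with hPdef
  have hνp : (ν : ℝ) < (p : ℝ) := by exact_mod_cast hν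
  have hp0 : (0 : ℝ) < (p : ℝ) := by exact_mod_cast hppos
  have hden : (1 : ℝ) - (ν : ℝ) / (p : ℝ) ≠ 0 := by
    have : (ν : ℝ) / (p : ℝ) < 1 := by rw [div_lt_one hp0]; exact hνp
    linarith
  set c : ℝ := (1 - 1 / (p : ℝ)) / (1 - (ν : ℝ) / (p : ℝ)) with hc
  set h : Nat.Primes → ℝ := fun q => if q = P then c else 1 with hhdef
  have hfact : (fun q : Nat.Primes =>
      ((1 - 1 / ((q : ℕ) : ℝ)) ^ (insert 0 (D.image (fun d => p * d))).card)⁻¹ *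
        (1 - (nu (insert 0 (D.image (fun d => p * d))) (q : ℕ) : ℝ) / ((q : ℕ) : ℝ))) =
      fun q => f q * h q := by
    funext q
    by_cases hqP : q = P
    · subst hqP
      simp only [hhdef, if_pos rfl, hfdef]
      show ((1 - 1 / (p : ℝ)) ^ (insert 0 (D.image (fun d => p * d))).card)⁻¹ *
          (1 - (nu (insert 0 (D.image (fun d => p * d))) p : ℝ) / (p : ℝ)) =
        ((1 - 1 / (p : ℝ)) ^ (insert 0 D).card)⁻¹ *
          (1 - (nu (insert 0 D) p : ℝ) / (p : ℝ)) * c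
      rw [hνP1, hcardP, hcardE, hνE, hc, Nat.cast_one, mul_assoc]
      congr 1
      rw [mul_comm]
      exact (div_mul_cancel₀ _ hden).symm
    · simp only [hhdef, if_neg hqP, mul_one, hfdef]
      have hqp : (q : ℕ) ≠ p := by
        intro hcon
        exact hqP (Subtype.ext hcon)
      rw [hνPq q hqp, hcardP, hcardE]
  have hh : HasProd h c := by
    have h1 := hasProd_single (f := h) P (fun b hb => if_neg hb)
    simpa [hhdef] using h1
  have hstep : singSeries (insert 0 (D.image (fun d => p * d))) =
      singSeries (insert 0 D) * c := by
    rw [hSE]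
    show (∏' q : Nat.Primes,
      ((1 - 1 / ((q : ℕ) : ℝ)) ^ (insert 0 (D.image (fun d => p * d))).card)⁻¹ *
        (1 - (nu (insert 0 (D.image (fun d => p * d))) (q : ℕ) : ℝ) / ((q : ℕ) : ℝ))) = _
    rw [hfact, hmul.tprod_mul hh.multipliable, hh.tprod_eq]
  rw [hstep]
  congr 1
  rw [hc]
  have hsub : (p : ℝ) - (ν : ℝ) ≠ 0 := by linarith
  field_simp
  ring
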